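/- arXiv:2604.14471 — 2 statements merged into one kernel-verified Lean document; each statement's English description precedes it below -/
import Mathlib

section
/- Let G be the regular square grid x·ℤ² in ℝ² with cell side length x > 0, and let T be an isosceles triangle whose two equal sides have length t and meet at angle φ. If t ≥ 4x/sin φ, then T contains a point of the grid G. -/
lemma round_err (x y : ℝ) (hx : 0 < x) :
    ((round (y / x) : ℝ) * x - y) ^ 2 ≤ (x / 2) ^ 2 := by
  have h1 := abs_sub_round (y / x)
  rw [abs_le] at h1
  have hd : (y / x - (round (y / x) : ℝ)) ^ 2 ≤ (1 / 2) ^ 2 := by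
    nlinarith [h1.1, h1.2]
  have h3 : (y / x - (round (y / x) : ℝ)) * x = y - (round (y / x) : ℝ) * x := by
    field_simp
  have h4 : (y - (round (y / x) : ℝ) * x) ^ 2
      = (y / x - (round (y / x) : ℝ)) ^ 2 * x ^ 2 := by rw [← h3]; ring
  nlinarith [mul_le_mul_of_nonneg_right hd (sq_nonneg x)]


lemma aux_sq16 (x y : ℝ) (hx : 0 < x) (h : 4 * x ≤ y) : x ^ 2 ≤ y ^ 2 / 16 := by
  nlinarith

lemma aux_cs (a b c d : ℝ) : (a * d - b * c) ^ 2 ≤ (a ^ 2 + b ^ 2) * (c ^ 2 + d ^ 2) := by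
  nlinarith [sq_nonneg (a * c + b * d)]

lemma aux_range (s : ℝ) (h : (s - 1/4) ^ 2 ≤ 1/16) : 0 ≤ s ∧ s ≤ 1/2 := by
  constructor <;> nlinarith [sq_nonneg s]

lemma aux_ee (e0 e1 x t s : ℝ) (h0 : e0 ^ 2 ≤ (x / 2) ^ 2) (h1 : e1 ^ 2 ≤ (x / 2) ^ 2)
    (hx2 : x ^ 2 ≤ (t * s) ^ 2 / 16) :
    (e0 ^ 2 + e1 ^ 2) * t ^ 2 ≤ (t ^ 2 * s) ^ 2 / 16 := by
  nlinarith [mul_le_mul_of_nonneg_right hx2 (sq_nonneg t), sq_nonneg (t * t * s),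
    mul_le_mul_of_nonneg_right (add_le_add h0 h1) (sq_nonneg t)]

set_option maxHeartbeats 1600000 in
/-- If an isosceles triangle has two equal sides of length `t ≥ 4x/sin φ`
meeting at angle `φ`, then it contains a point of the grid `x·ℤ²`. -/
theorem stmt1 (x t φ : ℝ) (hx : 0 < x) (hφ0 : 0 < φ) (hφπ : φ < Real.pi)
    (A B C : EuclideanSpace ℝ (Fin 2))
    (hAB : dist A B = t) (hAC : dist A C = t)
    (hangle : EuclideanGeometry.angle B A C = φ)
    (ht : t ≥ 4 * x / Real.sin φ) :
    ∃ a b : ℤ, (!₂[(a : ℝ) * x, (b : ℝ) * x] : EuclideanSpace ℝ (Fin 2)) ∈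
      convexHull ℝ {A, B, C} := by
  have hsin : 0 < Real.sin φ := Real.sin_pos_of_pos_of_lt_pi hφ0 hφπ
  have ht0 : 0 < t := lt_of_lt_of_le (by positivity) ht
  have hts : 4 * x ≤ t * Real.sin φ := by
    rw [ge_iff_le, div_le_iff₀ hsin] at ht; linarith
  obtain ⟨u0, hu0⟩ : ∃ r : ℝ, r = B 0 - A 0 := ⟨_, rfl⟩
  obtain ⟨u1, hu1⟩ : ∃ r : ℝ, r = B 1 - A 1 := ⟨_, rfl⟩
  obtain ⟨w0, hw0⟩ : ∃ r : ℝ, r = C 0 - A 0 := ⟨_, rfl⟩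
  obtain ⟨w1, hw1⟩ : ∃ r : ℝ, r = C 1 - A 1 := ⟨_, rfl⟩
  have h1 : u0 ^ 2 + u1 ^ 2 = t ^ 2 := by
    rw [EuclideanSpace.dist_eq, Fin.sum_univ_two] at hAB
    simp only [Real.dist_eq, sq_abs] at hAB
    rw [hu0, hu1, ← hAB, Real.sq_sqrt (by positivity)]
    ring
  have h2 : w0 ^ 2 + w1 ^ 2 = t ^ 2 := by
    rw [EuclideanSpace.dist_eq, Fin.sum_univ_two] at hAC
    simp only [Real.dist_eq, sq_abs] at hAC
    rw [hw0, hw1, ← hAC, Real.sq_sqrt (by positivity)]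
    ring
  have hBA : ‖B - A‖ = t := by rw [← dist_eq_norm, dist_comm]; exact hAB
  have hCA : ‖C - A‖ = t := by rw [← dist_eq_norm, dist_comm]; exact hAC
  have hang : InnerProductGeometry.angle (B - A) (C - A) = φ := by
    rw [← hangle]; rfl
  have hinner : (inner ℝ (B - A) (C - A) : ℝ) = t * t * Real.cos φ := by
    have h := InnerProductGeometry.cos_angle_mul_norm_mul_norm (B - A) (C - A)
    rw [hBA, hCA, hang] at h
    linarith only [h]
  have hip : (inner ℝ (B - A) (C - A) : ℝ)
      = (B 0 - A 0) * (C 0 - A 0) + (B 1 - A 1) * (C 1 - A 1) := by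
    simp [PiLp.inner_apply, Fin.sum_univ_two, RCLike.inner_apply, conj_trivial]
    ring
  have h3 : u0 * w0 + u1 * w1 = t ^ 2 * Real.cos φ := by
    rw [hu0, hu1, hw0, hw1]
    have h3' : (B 0 - A 0) * (C 0 - A 0) + (B 1 - A 1) * (C 1 - A 1)
        = t * t * Real.cos φ := by rw [← hip]; exact hinner
    linear_combination h3'
  obtain ⟨D, hD⟩ : ∃ r : ℝ, r = u0 * w1 - u1 * w0 := ⟨_, rfl⟩
  have hpy := Real.sin_sq_add_cos_sq φ
  have hD2 : D ^ 2 = (t ^ 2 * Real.sin φ) ^ 2 := by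
    rw [hD]
    linear_combination (w0^2 + w1^2) * h1 + t^2 * h2
      - (u0*w0 + u1*w1 + t^2*Real.cos φ) * h3 - t^4 * hpy
  have htspos : 0 < t ^ 2 * Real.sin φ := by positivity
  have hD2pos : 0 < D ^ 2 := by rw [hD2]; positivity
  have hDne : D ≠ 0 := by
    intro h; rw [h] at hD2pos; simp at hD2pos
  have hDne' : u0 * w1 - u1 * w0 ≠ 0 := by rw [← hD]; exact hDne
  set a : ℤ := round ((A 0 + (u0 + w0) / 4) / x) with ha
  set b : ℤ := round ((A 1 + (u1 + w1) / 4) / x) with hb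
  obtain ⟨e0, he0⟩ : ∃ r : ℝ, r = (a : ℝ) * x - (A 0 + (u0 + w0) / 4) := ⟨_, rfl⟩
  obtain ⟨e1, he1⟩ : ∃ r : ℝ, r = (b : ℝ) * x - (A 1 + (u1 + w1) / 4) := ⟨_, rfl⟩
  have he0sq : e0 ^ 2 ≤ (x / 2) ^ 2 := by
    rw [he0, ha]; exact round_err x (A 0 + (u0 + w0) / 4) hx
  have he1sq : e1 ^ 2 ≤ (x / 2) ^ 2 := by
    rw [he1, hb]; exact round_err x (A 1 + (u1 + w1) / 4) hx
  obtain ⟨s, hs⟩ : ∃ r : ℝ,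
      r = (((u0 + w0) / 4 + e0) * w1 - ((u1 + w1) / 4 + e1) * w0) / D := ⟨_, rfl⟩
  obtain ⟨q, hq⟩ : ∃ r : ℝ,
      r = (u0 * ((u1 + w1) / 4 + e1) - u1 * ((u0 + w0) / 4 + e0)) / D := ⟨_, rfl⟩
  -- Cramer's rule identities
  have hsub0 : s * u0 + q * w0 = (u0 + w0) / 4 + e0 := by
    rw [hs, hq]; field_simp; rw [hD]; ring
  have hsub1 : s * u1 + q * w1 = (u1 + w1) / 4 + e1 := by
    rw [hs, hq]; field_simp; rw [hD]; ring
  -- bounds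
  have hx2 : x ^ 2 ≤ (t * Real.sin φ) ^ 2 / 16 := aux_sq16 x _ hx hts
  have hEs : s - 1/4 = (e0 * w1 - e1 * w0) / D := by
    rw [hs]; field_simp; rw [hD]; ring
  have hEq : q - 1/4 = (u0 * e1 - u1 * e0) / D := by
    rw [hq]; field_simp; rw [hD]; ring
  have hCSs : (e0 * w1 - e1 * w0) ^ 2 ≤ (e0 ^ 2 + e1 ^ 2) * (w0 ^ 2 + w1 ^ 2) :=
    aux_cs e0 e1 w0 w1
  have hCSq : (u0 * e1 - u1 * e0) ^ 2 ≤ (e0 ^ 2 + e1 ^ 2) * (u0 ^ 2 + u1 ^ 2) := by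
    have h := aux_cs e1 e0 u1 u0
    linarith only [h, sq_nonneg (e1 * u0 - e0 * u1)]
  have hee : (e0 ^ 2 + e1 ^ 2) * t ^ 2 ≤ D ^ 2 / 16 := by
    rw [hD2]
    exact aux_ee e0 e1 x t (Real.sin φ) he0sq he1sq hx2
  have hEssq : (e0 * w1 - e1 * w0) ^ 2 ≤ D ^ 2 / 16 := by
    calc (e0 * w1 - e1 * w0) ^ 2 ≤ (e0 ^ 2 + e1 ^ 2) * (w0 ^ 2 + w1 ^ 2) := hCSs
      _ = (e0 ^ 2 + e1 ^ 2) * t ^ 2 := by rw [h2]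
      _ ≤ D ^ 2 / 16 := hee
  have hEqsq : (u0 * e1 - u1 * e0) ^ 2 ≤ D ^ 2 / 16 := by
    calc (u0 * e1 - u1 * e0) ^ 2 ≤ (e0 ^ 2 + e1 ^ 2) * (u0 ^ 2 + u1 ^ 2) := hCSq
      _ = (e0 ^ 2 + e1 ^ 2) * t ^ 2 := by rw [h1]
      _ ≤ D ^ 2 / 16 := hee
  have hs4 : (s - 1/4) ^ 2 ≤ 1/16 := by
    rw [hEs, div_pow]
    rw [div_le_iff₀ hD2pos]
    linarith only [hEssq]
  have hq4 : (q - 1/4) ^ 2 ≤ 1/16 := by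
    rw [hEq, div_pow]
    rw [div_le_iff₀ hD2pos]
    linarith only [hEqsq]
  obtain ⟨hs0, hs2⟩ := aux_range s hs4
  obtain ⟨hq0, hq2⟩ := aux_range q hq4
  have hq1 : (0:ℝ) < 1 - q := by linarith only [hq2]
  -- membership in convex hull
  have hAm : A ∈ convexHull ℝ ({A, B, C} : Set (EuclideanSpace ℝ (Fin 2))) :=
    subset_convexHull ℝ _ (by simp)
  have hBm : B ∈ convexHull ℝ ({A, B, C} : Set (EuclideanSpace ℝ (Fin 2))) :=
    subset_convexHull ℝ _ (by simp)
  have hCm : C ∈ convexHull ℝ ({A, B, C} : Set (EuclideanSpace ℝ (Fin 2))) :=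
    subset_convexHull ℝ _ (by simp)
  have hconv := convex_convexHull ℝ ({A, B, C} : Set (EuclideanSpace ℝ (Fin 2)))
  have hABm : ((1 - s - q) / (1 - q)) • A + (s / (1 - q)) • B
      ∈ convexHull ℝ ({A, B, C} : Set (EuclideanSpace ℝ (Fin 2))) := by
    refine hconv hAm hBm (div_nonneg (by linarith only [hs2, hq2]) hq1.le)
      (div_nonneg hs0 hq1.le) ?_
    field_simp
    ring
  have hmem : (1 - q) • (((1 - s - q) / (1 - q)) • A + (s / (1 - q)) • B) + q • C
      ∈ convexHull ℝ ({A, B, C} : Set (EuclideanSpace ℝ (Fin 2))) :=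
    hconv hABm hCm (by linarith only [hq2]) hq0 (by ring)
  refine ⟨a, b, ?_⟩
  have hcoef1 : (1 - q) * ((1 - s - q) / (1 - q)) = 1 - s - q := by
    field_simp
  have hcoef2 : (1 - q) * (s / (1 - q)) = s := by field_simp
  have hv0 : (a : ℝ) * x - A 0 = (u0 + w0) / 4 + e0 := by rw [he0]; ring
  have hv1 : (b : ℝ) * x - A 1 = (u1 + w1) / 4 + e1 := by rw [he1]; ring
  have hpt : (!₂[(a : ℝ) * x, (b : ℝ) * x] : EuclideanSpace ℝ (Fin 2))
      = (1 - q) • (((1 - s - q) / (1 - q)) • A + (s / (1 - q)) • B) + q • C := by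
    rw [smul_add, smul_smul, smul_smul, hcoef1, hcoef2]
    ext i
    fin_cases i
    · show (a : ℝ) * x = ((1 - s - q) • A + s • B + q • C) 0
      simp only [PiLp.add_apply, PiLp.smul_apply, smul_eq_mul]
      linear_combination hv0 - hsub0 + s * hu0 + q * hw0
    · show (b : ℝ) * x = ((1 - s - q) • A + s • B + q • C) 1
      simp only [PiLp.add_apply, PiLp.smul_apply, smul_eq_mul]
      linear_combination hv1 - hsub1 + s * hu1 + q * hw1
  rw [hpt]
  exact hmem
end

section
/- Any closed Euclidean disk of radius r in the plane can be covered by 7 closed Euclidean disks of radius r/2. -/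
private lemma key_ineq (r u q : ℝ) (hr : 0 ≤ r) (hq : 0 ≤ q)
    (hq2 : 3/4 * u ≤ q^2) (hlo : r^2/4 ≤ u) (hhi : u ≤ r^2) :
    u + r^2/2 ≤ Real.sqrt 3 * r * q := by
  have hs2 : Real.sqrt 3 ^ 2 = 3 := Real.sq_sqrt (by norm_num)
  have hs0 : 0 ≤ Real.sqrt 3 := Real.sqrt_nonneg 3
  have hB : 0 ≤ u + r^2/2 := by nlinarith
  have hA : 0 ≤ Real.sqrt 3 * r * q := by positivity
  have hsq : (u + r^2/2)^2 ≤ (Real.sqrt 3 * r * q)^2 := by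
    have h1 : 0 ≤ (u - r^2/4) * (r^2 - u) :=
      mul_nonneg (by linarith) (by linarith)
    nlinarith [mul_le_mul_of_nonneg_left hq2 (mul_self_nonneg r), sq_nonneg r]
  exact le_of_pow_le_pow_left₀ two_ne_zero hA hsq

set_option maxHeartbeats 4000000 in
/-- Any closed Euclidean disk of radius `r` in the plane can be covered by 7
closed disks of radius `r/2`. -/
theorem stmt4 (c : EuclideanSpace ℝ (Fin 2)) (r : ℝ) :
    ∃ centers : Fin 7 → EuclideanSpace ℝ (Fin 2),
      Metric.closedBall c r ⊆ ⋃ i, Metric.closedBall (centers i) (r / 2) := by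
  set s : ℝ := Real.sqrt 3 with hsdef
  have hs2 : s ^ 2 = 3 := Real.sq_sqrt (by norm_num)
  have hs0 : 0 ≤ s := Real.sqrt_nonneg 3
  set f : ℝ → ℝ → EuclideanSpace ℝ (Fin 2) :=
    fun a b => WithLp.toLp 2 ![c 0 + s*r/2*a, c 1 + s*r/2*b] with hfdef
  set centers : Fin 7 → EuclideanSpace ℝ (Fin 2) :=
    ![c, f 1 0, f (1/2) (s/2), f (-(1/2)) (s/2), f (-1) 0,
      f (-(1/2)) (-(s/2)), f (1/2) (-(s/2))] with hcdef
  have e0 : centers 0 = c := rfl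
  have e1 : centers 1 = f 1 0 := rfl
  have e2 : centers 2 = f (1/2) (s/2) := rfl
  have e3 : centers 3 = f (-(1/2)) (s/2) := rfl
  have e4 : centers 4 = f (-1) 0 := rfl
  have e5 : centers 5 = f (-(1/2)) (-(s/2)) := rfl
  have e6 : centers 6 = f (1/2) (-(s/2)) := rfl
  clear_value centers f s
  refine ⟨centers, ?_⟩
  intro p hp
  rw [Metric.mem_closedBall] at hp
  have hr : 0 ≤ r := le_trans dist_nonneg hp
  set x : ℝ := p 0 - c 0 with hxdef
  set y : ℝ := p 1 - c 1 with hydef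
  clear_value x y
  have hdpc : dist p c = Real.sqrt (x^2 + y^2) := by
    rw [EuclideanSpace.dist_eq]
    rw [hxdef, hydef]
    simp [Fin.sum_univ_two, Real.dist_eq, sq_abs]
  have hu : x^2 + y^2 ≤ r^2 := by
    have h1 : Real.sqrt (x^2+y^2) ≤ r := hdpc ▸ hp
    have h2 := Real.sq_sqrt (by positivity : (0:ℝ) ≤ x^2+y^2)
    nlinarith [Real.sqrt_nonneg (x^2+y^2)]
  have finish : ∀ a b : ℝ, a^2 + b^2 = 1 → 0 ≤ a*x + b*y →
      3/4 * (x^2+y^2) ≤ (a*x+b*y)^2 → r^2/4 ≤ x^2+y^2 →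
      dist p (f a b) ≤ r/2 := by
    intro a b hab hq hq2 hlo
    have key := key_ineq r (x^2+y^2) (a*x+b*y) hr hq hq2 hlo hu
    rw [← hsdef] at key
    rw [EuclideanSpace.dist_eq]
    have heq : ∑ i, dist (p i) (f a b i) ^ 2
        = (x - s*r/2*a)^2 + (y - s*r/2*b)^2 := by
      simp only [hfdef, Fin.sum_univ_two, Real.dist_eq, sq_abs, WithLp.ofLp_toLp,
        Matrix.cons_val_zero, Matrix.cons_val_one, Matrix.head_cons]
      rw [hxdef, hydef]
      ring
    rw [heq]
    have hbound : (x - s*r/2*a)^2 + (y - s*r/2*b)^2 ≤ (r/2)^2 := by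
      nlinarith [hab, hs2, key, sq_nonneg r,
        mul_le_mul_of_nonneg_left hab.le (by positivity : (0:ℝ) ≤ s^2*r^2/4)]
    calc Real.sqrt ((x - s*r/2*a)^2 + (y - s*r/2*b)^2)
        ≤ Real.sqrt ((r/2)^2) := Real.sqrt_le_sqrt hbound
      _ = r/2 := Real.sqrt_sq (by positivity)
  clear hcdef hfdef hsdef hxdef hydef
  rw [Set.mem_iUnion]
  by_cases h0 : x^2 + y^2 ≤ (r/2)^2
  · refine ⟨0, ?_⟩
    rw [Metric.mem_closedBall, e0, hdpc]
    calc Real.sqrt (x^2+y^2) ≤ Real.sqrt ((r/2)^2) := Real.sqrt_le_sqrt h0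
      _ = r/2 := Real.sqrt_sq (by positivity)
  · push_neg at h0
    have hlo : r^2/4 ≤ x^2 + y^2 := by nlinarith
    by_cases hxy : 3*y^2 ≤ x^2
    · by_cases hx : 0 ≤ x
      · refine ⟨1, ?_⟩
        rw [Metric.mem_closedBall, e1]
        have := finish 1 0 (by norm_num) (by simp only [one_mul, zero_mul, add_zero]; exact hx)
          (by nlinarith) hlo
        exact this
      · refine ⟨4, ?_⟩
        rw [Metric.mem_closedBall, e4]
        have := finish (-1) 0 (by norm_num) (by simp only [neg_one_mul, zero_mul, add_zero]; linarith)
          (by nlinarith) hlo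
        exact this
    · push_neg at hxy
      by_cases hx : 0 ≤ x
      · by_cases hy : 0 ≤ y
        · refine ⟨2, ?_⟩
          rw [Metric.mem_closedBall, e2]
          have hxsy' : x ≤ s * y := by nlinarith [mul_nonneg hs0 hy]
          have := finish (1/2) (s/2)
            (by linear_combination hs2/4)
            (by nlinarith [mul_nonneg hs0 hy, hx])
            (by nlinarith [mul_nonneg hx (sub_nonneg.2 hxsy')]) hlo
          exact this
        · push_neg at hy
          refine ⟨6, ?_⟩
          rw [Metric.mem_closedBall, e6]
          have hxsy' : x ≤ s * (-y) := by
            nlinarith [mul_nonneg hs0 (by linarith : (0:ℝ) ≤ -y)]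
          have := finish (1/2) (-(s/2))
            (by linear_combination hs2/4)
            (by nlinarith [mul_nonneg hs0 (by linarith : (0:ℝ) ≤ -y)])
            (by nlinarith [mul_nonneg hx (sub_nonneg.2 hxsy')]) hlo
          exact this
      · push_neg at hx
        by_cases hy : 0 ≤ y
        · refine ⟨3, ?_⟩
          rw [Metric.mem_closedBall, e3]
          have hxsy' : -x ≤ s * y := by nlinarith [mul_nonneg hs0 hy]
          have := finish (-(1/2)) (s/2)
            (by linear_combination hs2/4)
            (by nlinarith [mul_nonneg hs0 hy])
            (by nlinarith [mul_nonneg (by linarith : (0:ℝ) ≤ -x) (sub_nonneg.2 hxsy')]) hlo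
          exact this
        · push_neg at hy
          refine ⟨5, ?_⟩
          rw [Metric.mem_closedBall, e5]
          have hxsy' : -x ≤ s * (-y) := by
            nlinarith [mul_nonneg hs0 (by linarith : (0:ℝ) ≤ -y)]
          have := finish (-(1/2)) (-(s/2))
            (by linear_combination hs2/4)
            (by nlinarith [mul_nonneg hs0 (by linarith : (0:ℝ) ≤ -y)])
            (by nlinarith [mul_nonneg (by linarith : (0:ℝ) ≤ -x) (sub_nonneg.2 hxsy')]) hlo
          exact this
end
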